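/- If an allocation problem with n agents satisfies v_i(g) ≤ (ε/n)·v_i(M) for every agent i and item g, and X is an EF1 allocation of all items M, then for every agent i, n·v_i(X_i) ≥ v_i(M) − (n−1)·(ε/n)·v_i(M), and consequently v_i(g) ≤ ε'·v_i(X_i) for every g ∈ X_i, where ε' = ε/(1 − ((n−1)/n)·ε), assuming ε < n/(n−1). -/

import Mathlib

/-- Claim 2.3: in a large market with parameter `ε`, any EF1 allocation `X` of all
items satisfies `n·v_i(X_i) ≥ v_i(M) − (n−1)·(ε/n)·v_i(M)` for every agent `i`, and
consequently `v_i(g) ≤ ε'·v_i(X_i)` for `g ∈ X_i`, where `ε' = ε/(1 − ((n−1)/n)·ε)`. -/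
theorem large_market_ef1 (n m : ℕ) (hn : 0 < n)
    (v : Fin n → Fin m → ℝ) (hv : ∀ i g, 0 < v i g)
    (ε : ℝ) (hε0 : 0 < ε) (hε1 : ε ≤ 1) (hε2 : ε < (n : ℝ) / ((n : ℝ) - 1))
    (hlm : ∀ i g, v i g ≤ ε / (n : ℝ) * ∑ x : Fin m, v i x)
    (X : Fin n → Finset (Fin m))
    (hpart : ∀ g : Fin m, ∃! i, g ∈ X i)
    (hEF1 : ∀ i j : Fin n, (X j).Nonempty →
      ∃ g ∈ X j, ∑ x ∈ X i, v i x ≥ ∑ x ∈ X j \ {g}, v i x) :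
    ∀ i : Fin n,
      ((n : ℝ) * ∑ x ∈ X i, v i x ≥
        (∑ x : Fin m, v i x) - ((n : ℝ) - 1) * (ε / (n : ℝ)) * ∑ x : Fin m, v i x) ∧
      (∀ g ∈ X i,
        v i g ≤ ε / (1 - ((n : ℝ) - 1) / (n : ℝ) * ε) * ∑ x ∈ X i, v i x) := by
  intro i
  have hn' : (0:ℝ) < n := by exact_mod_cast hn
  set V := ∑ x : Fin m, v i x with hVdef
  have hV0 : 0 ≤ V := Finset.sum_nonneg fun x _ => (hv i x).le
  have hS0 : ∀ j, 0 ≤ ∑ x ∈ X j, v i x :=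
    fun j => Finset.sum_nonneg fun x _ => (hv i x).le
  set Si := ∑ x ∈ X i, v i x with hSidef
  choose ι hι1 hι2 using hpart
  have hXeq : ∀ j, X j = Finset.univ.filter fun g => ι g = j := by
    intro j
    ext g
    simp only [Finset.mem_filter, Finset.mem_univ, true_and]
    constructor
    · intro h; exact (hι2 g j h).symm
    · intro h; exact h ▸ hι1 g
  have hVsum : V = ∑ j : Fin n, ∑ x ∈ X j, v i x := by
    rw [hVdef]
    rw [show (∑ j : Fin n, ∑ x ∈ X j, v i x)
        = ∑ j : Fin n, ∑ x ∈ Finset.univ.filter fun g => ι g = j, v i x from by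
        simp_rw [hXeq]]
    exact (Finset.sum_fiberwise Finset.univ ι (v i)).symm
  have hbound : ∀ j, ∑ x ∈ X j, v i x ≤ Si + ε / n * V := by
    intro j
    have hnn : 0 ≤ ε / n * V := by positivity
    rcases (X j).eq_empty_or_nonempty with h | h
    · simp [h]; linarith [hS0 i]
    · obtain ⟨g, hg, hge⟩ := hEF1 i j h
      have hsub : ∑ x ∈ X j \ {g}, v i x = (∑ x ∈ X j, v i x) - v i g := by
        rw [Finset.sum_sdiff_eq_sub (Finset.singleton_subset_iff.mpr hg),
          Finset.sum_singleton]
      have hlg := hlm i g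
      rw [hsub] at hge
      rw [← hVdef] at hlg
      linarith
  -- total bound
  have hkey : V ≤ Si + ((n:ℝ) - 1) * (Si + ε / n * V) := by
    have h1 : ∑ j ∈ Finset.univ.erase i, ∑ x ∈ X j, v i x
        ≤ ∑ j ∈ Finset.univ.erase i, (Si + ε / n * V) :=
      Finset.sum_le_sum fun j _ => hbound j
    have h2 : ∑ j ∈ Finset.univ.erase i, (Si + ε / n * V)
        = ((n:ℝ) - 1) * (Si + ε / n * V) := by
      rw [Finset.sum_const, Finset.card_erase_of_mem (Finset.mem_univ i),
        Finset.card_univ, Fintype.card_fin, nsmul_eq_mul, Nat.cast_sub hn,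
        Nat.cast_one]
    have h3 : V = Si + ∑ j ∈ Finset.univ.erase i, ∑ x ∈ X j, v i x := by
      rw [hVsum, ← Finset.add_sum_erase _ _ (Finset.mem_univ i)]
    linarith
  have part1 : (n:ℝ) * Si ≥ V - ((n:ℝ) - 1) * (ε / n) * V := by
    nlinarith [hkey]
  refine ⟨part1, ?_⟩
  intro g hg
  have hd : 0 < 1 - ((n:ℝ) - 1) / n * ε := by
    rcases eq_or_lt_of_le (Nat.one_le_iff_ne_zero.mpr hn.ne' : 1 ≤ n) with h1 | h1
    · have hne : (n:ℝ) = 1 := by exact_mod_cast h1.symm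
      rw [hne]; norm_num
    · have hn1 : (0:ℝ) < (n:ℝ) - 1 := by
        have : (1:ℝ) < n := by exact_mod_cast h1
        linarith
      have hlt : ε * ((n:ℝ) - 1) < n := by
        have := (lt_div_iff₀ hn1).mp hε2
        linarith
      rw [sub_pos, div_mul_eq_mul_div, div_lt_one hn']
      linarith
  have hlg := hlm i g
  rw [← hVdef] at hlg
  -- from part1 : n*Si ≥ V * (1 - (n-1)/n * ε)
  have hV_le : V * (1 - ((n:ℝ) - 1) / n * ε) ≤ (n:ℝ) * Si := by
    have : ((n:ℝ) - 1) * (ε / n) = ((n:ℝ) - 1) / n * ε := by ring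
    nlinarith [part1]
  -- goal: v i g ≤ ε / d * Si
  rw [div_mul_eq_mul_div, le_div_iff₀ hd]
  -- v i g * d ≤ ε * Si
  have h5 : v i g * (1 - ((n:ℝ) - 1) / n * ε) ≤ ε / n * V * (1 - ((n:ℝ) - 1) / n * ε) := by
    exact mul_le_mul_of_nonneg_right hlg hd.le
  have h6 : ε / n * (V * (1 - ((n:ℝ) - 1) / n * ε)) ≤ ε / n * ((n:ℝ) * Si) :=
    mul_le_mul_of_nonneg_left hV_le (by positivity)
  have h7 : ε / n * ((n:ℝ) * Si) = ε * Si := by field_simp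
  nlinarith [h5, h6]
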